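/- In the Section 7 setting, let Γ' be a signed GKM structure on the underlying graph of Γ which induces the same unsigned GKM graph as Γ and in which, for every i, the labels of the two basic edges f_i and h_i over e_i agree. Then the weights of the fiber edges of Γ' agree with those of Γ up to a global sign: either α'_i = α_i for all i, or α'_i = −α_i for all i, where α_i and α'_i denote the weights of the oriented fiber edge g_i in Γ and Γ' respectively. -/
import Mathlib


open Classical

namespace GKMPaper

/-- `ℤ^m`, the weight lattice. -/
abbrev Zm (m : ℕ) := Fin m → ℤ

/-- The relation identifying a vector with its negative. -/
def pmRel (m : ℕ) (a b : Zm m) : Prop := a = b ∨ a = -b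

theorem pmRel_equiv (m : ℕ) : Equivalence (pmRel m) := by
  constructor
  · intro a; exact Or.inl rfl
  · intro a b hab
    rcases hab with hh | hh
    · exact Or.inl hh.symm
    · exact Or.inr (by rw [hh, neg_neg])
  · intro a b c h1 h2
    rcases h1 with h1 | h1 <;> rcases h2 with h2 | h2
    · exact Or.inl (h1.trans h2)
    · exact Or.inr (h1.trans h2)
    · exact Or.inr (by rw [h1, h2])
    · exact Or.inl (by rw [h1, h2, neg_neg])

def pmSetoid (m : ℕ) : Setoid (Zm m) := ⟨pmRel m, pmRel_equiv m⟩

/-- `ℤ^m / ±1`. -/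
def ZmPM (m : ℕ) := Quotient (pmSetoid m)

/-- The projection `ℤ^m → ℤ^m/±1`. -/
def pm {m : ℕ} (a : Zm m) : ZmPM m := Quotient.mk (pmSetoid m) a

/-- Linear independence over `ℤ`. -/
def Indep {m : ℕ} (a b : Zm m) : Prop :=
  ∀ c d : ℤ, c • a + d • b = 0 → c = 0 ∧ d = 0

/-- An abstract graph with finite vertex and edge sets, each edge occurring with
both orientations, and no loops. -/
structure OrGraph : Type 1 where
  V : Type
  E : Type
  fV : Fintype V
  fE : Fintype E
  dV : DecidableEq V
  dE : DecidableEq E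
  src : E → V
  dst : E → V
  rev : E → E
  rev_rev : ∀ e, rev (rev e) = e
  rev_ne : ∀ e, rev e ≠ e
  src_rev : ∀ e, src (rev e) = dst e
  no_loop : ∀ e, src e ≠ dst e

attribute [instance] OrGraph.fV OrGraph.fE OrGraph.dV OrGraph.dE

/-- A connection on a graph. -/
structure Connection (G : OrGraph) where
  t : G.E → G.E → G.E
  src_t : ∀ e f, G.src f = G.src e → G.src (t e f) = G.dst e
  t_self : ∀ e, t e e = G.rev e
  t_inv : ∀ e f, G.src f = G.src e → t (G.rev e) (t e f) = f

/-- `k`-valence. -/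
def OrGraph.Regular (G : OrGraph) (k : ℕ) : Prop :=
  ∀ v : G.V, Fintype.card {e : G.E // G.src e = v} = k

def OrGraph.Adj (G : OrGraph) (v w : G.V) : Prop :=
  ∃ e, G.src e = v ∧ G.dst e = w

def OrGraph.IsConn (G : OrGraph) : Prop :=
  ∀ v w : G.V, Relation.ReflTransGen G.Adj v w

/-- Compatibility of a connection with an unsigned axial function. -/
def UnsignedCompat {m : ℕ} (G : OrGraph) (α : G.E → ZmPM m) (C : Connection G) : Prop :=
  (∀ e f : G.E, G.src f = G.src e → e ≠ f →
      ∀ a b : Zm m, pm a = α e → pm b = α f → Indep a b) ∧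
  (∀ e f : G.E, G.src f = G.src e →
      ∃ (a g : Zm m) (c : ℤ), pm a = α f ∧ pm g = α e ∧ α (C.t e f) = pm (a + c • g)) ∧
  (∀ e : G.E, α (G.rev e) = α e)

/-- `(G, α)` is an (unsigned) abstract GKM graph of valence `k` with labels in `ℤ^m/±1`. -/
def IsGKM {m : ℕ} (G : OrGraph) (k : ℕ) (α : G.E → ZmPM m) : Prop :=
  G.Regular k ∧ G.IsConn ∧ ∃ C : Connection G, UnsignedCompat G α C

/-- Compatibility of a connection with a signed axial function. -/
def SignedCompat {m : ℕ} (G : OrGraph) (α : G.E → Zm m) (C : Connection G) : Prop :=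
  (∀ e f : G.E, G.src f = G.src e → e ≠ f → Indep (α e) (α f)) ∧
  (∀ e f : G.E, G.src f = G.src e → ∃ c : ℤ, α (C.t e f) = α f + c • α e) ∧
  (∀ e : G.E, α (G.rev e) = - α e)

/-- `(G, α)` is a signed abstract GKM graph of valence `k` with labels in `ℤ^m`. -/
def IsSignedGKM {m : ℕ} (G : OrGraph) (k : ℕ) (α : G.E → Zm m) : Prop :=
  G.Regular k ∧ G.IsConn ∧ ∃ C : Connection G, SignedCompat G α C

/-- Effectivity of an unsigned GKM graph: at every vertex, the labels of the
outgoing edges lift to a generating set of `ℤ^m`. -/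
def Effective {m : ℕ} (G : OrGraph) (α : G.E → ZmPM m) : Prop :=
  ∀ v : G.V, ∃ lift : {e : G.E // G.src e = v} → Zm m,
    (∀ e, pm (lift e) = α e.1) ∧ Submodule.span ℤ (Set.range lift) = ⊤

def SignedEffective {m : ℕ} (G : OrGraph) (α : G.E → Zm m) : Prop :=
  ∀ v : G.V,
    Submodule.span ℤ (Set.range (fun e : {e : G.E // G.src e = v} => α e.1)) = ⊤

/-- A graph fibration: a morphism sending vertices to vertices and horizontal
edges to edges, bijectively from the horizontal edges at `p` to the edges at `π(p)`. -/
structure GraphFib (G B : OrGraph) where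
  onV : G.V → B.V
  onE : G.E → B.E
  src_onE : ∀ e, onV (G.src e) ≠ onV (G.dst e) → B.src (onE e) = onV (G.src e)
  dst_onE : ∀ e, onV (G.src e) ≠ onV (G.dst e) → B.dst (onE e) = onV (G.dst e)
  rev_onE : ∀ e, onV (G.src e) ≠ onV (G.dst e) → onE (G.rev e) = B.rev (onE e)

def GraphFib.Vertical {G B : OrGraph} (π : GraphFib G B) (e : G.E) : Prop :=
  π.onV (G.src e) = π.onV (G.dst e)

def GraphFib.IsFib {G B : OrGraph} (π : GraphFib G B) : Prop :=
  ∀ p : G.V, Function.Bijective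
    (fun e : {e : G.E // G.src e = p ∧ ¬ π.Vertical e} =>
      (⟨π.onE e.1, by rw [π.src_onE e.1 e.2.2, e.2.1]⟩ : {f : B.E // B.src f = π.onV p}))

/-- The extra conditions for a (unsigned) GKM fibration, w.r.t. connections `C`, `CB`. -/
def GKMFibCompat {m : ℕ} {G B : OrGraph} (αΓ : G.E → ZmPM m) (αB : B.E → ZmPM m)
    (π : GraphFib G B) (C : Connection G) (CB : Connection B) : Prop :=
  (∀ e, ¬ π.Vertical e → αΓ e = αB (π.onE e)) ∧
  (∀ e f, G.src f = G.src e → π.Vertical f → π.Vertical (C.t e f)) ∧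
  (∀ e f, G.src f = G.src e → ¬ π.Vertical e → ¬ π.Vertical f →
      ¬ π.Vertical (C.t e f) ∧ π.onE (C.t e f) = CB.t (π.onE e) (π.onE f))

/-- `π` is a GKM fibration of unsigned GKM graphs. -/
def IsGKMFib {m : ℕ} {G B : OrGraph} (αΓ : G.E → ZmPM m) (αB : B.E → ZmPM m)
    (π : GraphFib G B) : Prop :=
  π.IsFib ∧ ∃ (C : Connection G) (CB : Connection B),
    UnsignedCompat G αΓ C ∧ UnsignedCompat B αB CB ∧ GKMFibCompat αΓ αB π C CB

def SignedGKMFibCompat {m : ℕ} {G B : OrGraph} (sΓ : G.E → Zm m) (sB : B.E → Zm m)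
    (π : GraphFib G B) (C : Connection G) (CB : Connection B) : Prop :=
  (∀ e, ¬ π.Vertical e → sΓ e = sB (π.onE e)) ∧
  (∀ e f, G.src f = G.src e → π.Vertical f → π.Vertical (C.t e f)) ∧
  (∀ e f, G.src f = G.src e → ¬ π.Vertical e → ¬ π.Vertical f →
      ¬ π.Vertical (C.t e f) ∧ π.onE (C.t e f) = CB.t (π.onE e) (π.onE f))

/-- `π` is a signed GKM fibration of signed GKM graphs. -/
def IsSignedGKMFib {m : ℕ} {G B : OrGraph} (sΓ : G.E → Zm m) (sB : B.E → Zm m)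
    (π : GraphFib G B) : Prop :=
  π.IsFib ∧ ∃ (C : Connection G) (CB : Connection B),
    SignedCompat G sΓ C ∧ SignedCompat B sB CB ∧ SignedGKMFibCompat sΓ sB π C CB

/-- `(π, ft)` is a fiberwise signed fibration: `ft` is a lift of `αΓ` on the
vertical edges, satisfying the congruence condition w.r.t. suitable connections. -/
def IsFiberwiseSigned {m : ℕ} {G B : OrGraph} (αΓ : G.E → ZmPM m) (αB : B.E → ZmPM m)
    (π : GraphFib G B) (ft : G.E → Zm m) : Prop :=
  π.IsFib ∧
  (∀ e, π.Vertical e → pm (ft e) = αΓ e) ∧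
  (∀ e, π.Vertical e → ft (G.rev e) = - ft e) ∧
  ∃ (C : Connection G) (CB : Connection B),
    UnsignedCompat G αΓ C ∧ UnsignedCompat B αB CB ∧ GKMFibCompat αΓ αB π C CB ∧
    ∀ e f, G.src f = G.src e → π.Vertical f →
      ∃ (g : Zm m) (c : ℤ), pm g = αΓ e ∧ ft (C.t e f) = ft f + c • g

/-- Isomorphism of unsigned GKM graphs. -/
structure GKMIso {m : ℕ} (G : OrGraph) (α : G.E → ZmPM m)
    (G' : OrGraph) (α' : G'.E → ZmPM m) : Type where
  fV : G.V ≃ G'.V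
  fE : G.E ≃ G'.E
  φ : Zm m ≃ₗ[ℤ] Zm m
  src_comm : ∀ e, G'.src (fE e) = fV (G.src e)
  dst_comm : ∀ e, G'.dst (fE e) = fV (G.dst e)
  rev_comm : ∀ e, fE (G.rev e) = G'.rev (fE e)
  lab : ∀ (e : G.E) (a : Zm m), pm a = α e → α' (fE e) = pm (φ a)

/-- Isomorphism of signed GKM graphs. -/
structure SignedGKMIso {m : ℕ} (G : OrGraph) (α : G.E → Zm m)
    (G' : OrGraph) (α' : G'.E → Zm m) : Type where
  fV : G.V ≃ G'.V
  fE : G.E ≃ G'.E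
  φ : Zm m ≃ₗ[ℤ] Zm m
  src_comm : ∀ e, G'.src (fE e) = fV (G.src e)
  dst_comm : ∀ e, G'.dst (fE e) = fV (G.dst e)
  rev_comm : ∀ e, fE (G.rev e) = G'.rev (fE e)
  lab : ∀ e, α' (fE e) = φ (α e)

/-- Equivalence of fiberwise signed fibrations over the same base (identity on `ℤ^m`). -/
structure FSFEquiv {m : ℕ} {G B G' : OrGraph}
    (αΓ : G.E → ZmPM m) (π : GraphFib G B) (ft : G.E → Zm m)
    (αΓ' : G'.E → ZmPM m) (π' : GraphFib G' B) (ft' : G'.E → Zm m) : Type where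
  fV : G.V ≃ G'.V
  fE : G.E ≃ G'.E
  src_comm : ∀ e, G'.src (fE e) = fV (G.src e)
  dst_comm : ∀ e, G'.dst (fE e) = fV (G.dst e)
  rev_comm : ∀ e, fE (G.rev e) = G'.rev (fE e)
  lab : ∀ e, αΓ' (fE e) = αΓ e
  baseV : ∀ p, π'.onV (fV p) = π.onV p
  baseE : ∀ e, ¬ π.Vertical e → π'.onE (fE e) = π.onE e
  fiblab : ∀ e, π.Vertical e → ft' (fE e) = ft e

/-- Equivalence of signed GKM fibrations over the same base (identity on `ℤ^m`). -/
structure SFEquiv {m : ℕ} {G B G' : OrGraph}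
    (sΓ : G.E → Zm m) (π : GraphFib G B)
    (sΓ' : G'.E → Zm m) (π' : GraphFib G' B) : Type where
  fV : G.V ≃ G'.V
  fE : G.E ≃ G'.E
  src_comm : ∀ e, G'.src (fE e) = fV (G.src e)
  dst_comm : ∀ e, G'.dst (fE e) = fV (G.dst e)
  rev_comm : ∀ e, fE (G.rev e) = G'.rev (fE e)
  lab : ∀ e, sΓ' (fE e) = sΓ e
  baseV : ∀ p, π'.onV (fV p) = π.onV p
  baseE : ∀ e, ¬ π.Vertical e → π'.onE (fE e) = π.onE e

/-- Realizing `ℤ²` inside `ℝ² = ℂ`. -/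
noncomputable def toC (a : Zm 2) : ℂ := (a 0 : ℝ) + (a 1 : ℝ) * Complex.I

def cross (a b : ℂ) : ℝ := a.re * b.im - a.im * b.re

/-- A vertex of a signed GKM graph with labels in `ℤ²` is interior if the cone
spanned by the labels of the edges emanating from it is all of `ℝ²`. -/
def InteriorVtx (G : OrGraph) (α : G.E → Zm 2) (p : G.V) : Prop :=
  ∀ x : ℂ, ∃ c : G.E → ℝ, (∀ e, 0 ≤ c e) ∧
    x = ∑ e ∈ Finset.univ.filter (fun e : G.E => G.src e = p), c e • toC (α e)

/-- The angle from `w` to `w'`, represented in `[0, 2π)` if `ε = true`,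
and in `(-2π, 0]` if `ε = false`. -/
noncomputable def angTo (ε : Bool) (w w' : ℂ) : ℝ :=
  if ε then (if (w' / w).arg < 0 then (w' / w).arg + 2 * Real.pi else (w' / w).arg)
  else (if 0 < (w' / w).arg then (w' / w).arg - 2 * Real.pi else (w' / w).arg)

/-- The winding number of a cyclic sequence of vectors w.r.t. the orientation `ε`. -/
noncomputable def winding {nn : ℕ} [NeZero nn] (w : ZMod nn → ℂ) (ε : Bool) : ℝ :=
  (1 / (2 * Real.pi)) * ∑ i : ZMod nn, |angTo ε (w i) (w (i + 1))|

def LocallyConvex {nn : ℕ} (w : ZMod nn → ℂ) : Prop :=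
  (∀ i, angTo true (w i) (w (i + 1)) ∈ Set.Ioo 0 Real.pi) ∨
  (∀ i, angTo false (w i) (w (i + 1)) ∈ Set.Ioo (-Real.pi) 0)

/-- `ε` is the preferred orientation of the locally convex sequence `w`. -/
def Preferred {nn : ℕ} (w : ZMod nn → ℂ) (ε : Bool) : Prop :=
  (ε = true ∧ ∀ i, angTo true (w i) (w (i + 1)) ∈ Set.Ioo 0 Real.pi) ∨
  (ε = false ∧ ∀ i, angTo false (w i) (w (i + 1)) ∈ Set.Ioo (-Real.pi) 0)

/-- `P` lists the vertices of a strictly convex polygon in cyclic order. -/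
def ConvexCyclic {nn : ℕ} (P : ZMod nn → ℂ) : Prop :=
  (∀ i j, j ≠ i → j ≠ i + 1 → 0 < cross (P (i + 1) - P i) (P j - P i)) ∨
  (∀ i j, j ≠ i → j ≠ i + 1 → cross (P (i + 1) - P i) (P j - P i) < 0)

def SubAdj (G : OrGraph) (S : Set G.E) (v w : G.V) : Prop :=
  ∃ e ∈ S, G.src e = v ∧ G.dst e = w

/-- `S` is (the edge set of) a connected `2`-valent signed GKM subgraph of `(G, α)`. -/
def IsSigned2ValentSub (G : OrGraph) (α : G.E → Zm 2) (S : Set G.E) : Prop :=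
  S.Nonempty ∧
  (∀ e ∈ S, G.rev e ∈ S) ∧
  (∀ v : G.V, (∃ e ∈ S, G.src e = v) → Nat.card {e : G.E // e ∈ S ∧ G.src e = v} = 2) ∧
  (∀ v w : G.V, (∃ e ∈ S, G.src e = v) → (∃ e ∈ S, G.src e = w) →
      Relation.ReflTransGen (SubAdj G S) v w) ∧
  ∃ T : G.E → G.E → G.E,
    (∀ e f, e ∈ S → f ∈ S → G.src f = G.src e → T e f ∈ S ∧ G.src (T e f) = G.dst e) ∧
    (∀ e, e ∈ S → T e e = G.rev e) ∧
    (∀ e f, e ∈ S → f ∈ S → G.src f = G.src e → T (G.rev e) (T e f) = f) ∧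
    (∀ e f, e ∈ S → f ∈ S → G.src f = G.src e → ∃ c : ℤ, α (T e f) = α f + c • α e)

/-- A `2`-valent signed GKM subgraph of polytope type: it is a cycle realized by the
boundary edges of a simple convex `2`-polytope, with labels representing the slopes. -/
def IsPolytopeTypeSub (G : OrGraph) (α : G.E → Zm 2) (S : Set G.E) : Prop :=
  IsSigned2ValentSub G α S ∧
  ∃ np : ℕ, 3 ≤ np ∧
    ∃ (cyc : ZMod np → G.E) (P : ZMod np → ℂ) (t : ZMod np → ℝ),
      (∀ i, cyc i ∈ S) ∧
      (∀ ed ∈ S, ∃ i, ed = cyc i ∨ ed = G.rev (cyc i)) ∧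
      (∀ i, G.dst (cyc i) = G.src (cyc (i + 1))) ∧
      ConvexCyclic P ∧
      (∀ i, 0 < t i) ∧
      (∀ i, P (i + 1) - P i = t i • toC (α (cyc i)))

/-- A fibration over an `n`-gon base is of product type if the lifts of a path
once around the base are closed. -/
def ProductType {G B : OrGraph} (π : GraphFib G B) {nn : ℕ} (eB : ZMod nn → B.E) : Prop :=
  ∃ l : ZMod nn → G.E,
    ∀ i, ¬ π.Vertical (l i) ∧ π.onE (l i) = eB i ∧ G.dst (l i) = G.src (l (i + 1))

/-- `ℤ`-indexed `n`-gon data for a `2`-valent base graph. -/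
structure ZGonData (B : OrGraph) (n : ℕ) where
  v : ℤ → B.V
  eB : ℤ → B.E
  v_per : ∀ i, v (i + n) = v i
  e_per : ∀ i, eB (i + n) = eB i
  src_e : ∀ i, B.src (eB i) = v i
  dst_e : ∀ i, B.dst (eB i) = v (i + 1)
  v_inj : ∀ i j : ℤ, 0 ≤ i → i < n → 0 ≤ j → j < n → v i = v j → i = j
  v_surj : ∀ w : B.V, ∃ i : ℤ, v i = w
  e_cover : ∀ ed : B.E, ∃ i : ℤ, ed = eB i ∨ ed = B.rev (eB i)

/-- A choice of sign representatives `γ_i` of the base labels with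
`γ_i ≡ -γ_{i+2} (mod γ_{i+1})` for all `i ∈ ℤ`. -/
structure GammaData {B : OrGraph} {n : ℕ} (αB : B.E → ZmPM 2) (D : ZGonData B n) where
  γ : ℤ → Zm 2
  lift : ∀ i, pm (γ i) = αB (D.eB i)
  cong : ∀ i, ∃ c : ℤ, γ i + γ (i + 2) = c • γ (i + 1)

/-- A fiberwise signed `3`-valent GKM fibration over `(B, αB)`. -/
structure FSFOver (B : OrGraph) (αB : B.E → ZmPM 2) : Type 1 where
  G : OrGraph
  αΓ : G.E → ZmPM 2
  hΓ : IsGKM G 3 αΓ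
  π : GraphFib G B
  ft : G.E → Zm 2
  isfs : IsFiberwiseSigned αΓ αB π ft

def FSFOver.Equiv {B : OrGraph} {αB : B.E → ZmPM 2} (F F' : FSFOver B αB) : Prop :=
  Nonempty (FSFEquiv F.αΓ F.π F.ft F'.αΓ F'.π F'.ft)

/-- A signed `3`-valent GKM fibration over the signed graph `(B, sB)`. -/
structure SFOver (B : OrGraph) (sB : B.E → Zm 2) : Type 1 where
  G : OrGraph
  sΓ : G.E → Zm 2
  hΓ : IsSignedGKM G 3 sΓ
  π : GraphFib G B
  issf : IsSignedGKMFib sΓ sB π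

def SFOver.Equiv {B : OrGraph} {sB : B.E → Zm 2} (F F' : SFOver B sB) : Prop :=
  Nonempty (SFEquiv F.sΓ F.π F'.sΓ F'.π)

/-- The fibration `F` realizes the classification datum `([k], η)` w.r.t. the fixed data. -/
def RealizesFS {B : OrGraph} {αB : B.E → ZmPM 2} {n : ℕ} (D : ZGonData B n)
    (Γd : GammaData αB D) (F : FSFOver B αB) (k : ZMod n → ℤ) (η : Bool) : Prop :=
  (η = false ↔ ProductType F.π (fun i : ZMod n => D.eB i.val)) ∧
  ∃ (gE : ℤ → F.G.E) (αf : ℤ → Zm 2) (kk : ℤ → ℤ),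
    (∀ i, F.π.Vertical (gE i)) ∧
    (∀ i, F.π.onV (F.G.src (gE i)) = D.v i) ∧
    (∀ i, gE (i + n) = gE i ∨ gE (i + n) = F.G.rev (gE i)) ∧
    (∀ i, pm (αf i) = F.αΓ (gE i)) ∧
    (∀ i, ∃ c : ℤ, αf (i + 1) = αf i + c • Γd.γ i) ∧
    (∀ i, αf i = kk i • Γd.γ (i - 1) - kk (i - 1) • Γd.γ i) ∧
    (∀ i, kk i ≠ 0) ∧
    (∀ i : ZMod n, k i = kk i.val)

/-- The signed fibration `F` realizes the classification datum `([k], η)`. -/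
def RealizesS {B : OrGraph} (sB : B.E → Zm 2) {αB : B.E → ZmPM 2} {n : ℕ}
    (D : ZGonData B n) (Γd : GammaData αB D) (F : SFOver B sB)
    (k : ZMod n → ℤ) (η : Bool) : Prop :=
  (η = false ↔ ProductType F.π (fun i : ZMod n => D.eB i.val)) ∧
  ∃ (gE : ℤ → F.G.E) (αf : ℤ → Zm 2) (kk : ℤ → ℤ),
    (∀ i, F.π.Vertical (gE i)) ∧
    (∀ i, F.π.onV (F.G.src (gE i)) = D.v i) ∧
    (∀ i, gE (i + n) = gE i ∨ gE (i + n) = F.G.rev (gE i)) ∧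
    (∀ i, pm (αf i) = pm (F.sΓ (gE i))) ∧
    (∀ i, ∃ c : ℤ, αf (i + 1) = αf i + c • Γd.γ i) ∧
    (∀ i, αf i = kk i • Γd.γ (i - 1) - kk (i - 1) • Γd.γ i) ∧
    (∀ i, kk i ≠ 0) ∧
    (∀ i : ZMod n, k i = kk i.val)

def KRel (n : ℕ) (a b : {k : ZMod n → ℤ // ∀ i, k i ≠ 0}) : Prop :=
  a.1 = b.1 ∨ a.1 = - b.1

/-- `((ℤ∖{0})^n)/±1`. -/
def KClass (n : ℕ) := Quot (KRel n)

/-- The Section 7 setting: a signed GKM fibration of twisted type of a `3`-valent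
signed GKM graph `Γ` over `B`, the boundary of a 2-dimensional Delzant polytope with
`n` vertices, with `Γ` having `n-1` interior vertices; with the basic edges `f i`, `h i`
over `e i` and the fiber edges `g i`. -/
structure Section7 : Type 1 where
  n : ℕ
  hn : 3 ≤ n
  G : OrGraph
  B : OrGraph
  aG : G.E → Zm 2
  aB : B.E → Zm 2
  hG : IsSignedGKM G 3 aG
  hB : IsSignedGKM B 2 aB
  π : GraphFib G B
  hfib : IsSignedGKMFib aG aB π
  v : ZMod n → B.V
  e : ZMod n → B.E
  v_bij : Function.Bijective v
  src_e : ∀ i, B.src (e i) = v i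
  dst_e : ∀ i, B.dst (e i) = v (i + 1)
  e_cover : ∀ ed : B.E, ∃ i, ed = e i ∨ ed = B.rev (e i)
  P : ZMod n → ℂ
  tl : ZMod n → ℝ
  tl_pos : ∀ i, 0 < tl i
  polygon : ConvexCyclic P
  slope : ∀ i, P (i + 1) - P i = tl i • toC (aB (e i))
  delzant : ∀ i, (aB (e (i - 1)) 0) * (aB (e i) 1) - (aB (e (i - 1)) 1) * (aB (e i) 0) = 1 ∨
                 (aB (e (i - 1)) 0) * (aB (e i) 1) - (aB (e (i - 1)) 1) * (aB (e i) 0) = -1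
  f : ZMod n → G.E
  h : ZMod n → G.E
  g : ZMod n → G.E
  f_horiz : ∀ i, ¬ π.Vertical (f i)
  h_horiz : ∀ i, ¬ π.Vertical (h i)
  f_over : ∀ i, π.onE (f i) = e i
  h_over : ∀ i, π.onE (h i) = e i
  f_ne_h : ∀ i, f i ≠ h i
  g_vert : ∀ i, π.Vertical (g i)
  g_src : ∀ i, G.src (g i) = G.src (f i)
  g_dst : ∀ i, G.dst (g i) = G.src (h i)
  chain_f : ∀ i : ZMod n, i + 1 ≠ 0 → G.dst (f i) = G.src (f (i + 1))
  chain_h : ∀ i : ZMod n, i + 1 ≠ 0 → G.dst (h i) = G.src (h (i + 1))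
  twist_f : G.dst (f (-1)) = G.src (h 0)
  twist_h : G.dst (h (-1)) = G.src (f 0)
  k : ZMod n → ℤ
  k_ne : ∀ i, k i ≠ 0
  fiberweight : ∀ i, aG (g i) =
    k i • aB (e (i - 1)) - (if i = 0 then - k (i - 1) else k (i - 1)) • aB (e i)
  interior_count : Nat.card {p : G.V // InteriorVtx G aG p} = n - 1

/-- The type II signed structure: the signs of the labels of every second pair
of basic edges are reversed. -/
noncomputable def Section7.alphaII (S : Section7) : S.G.E → Zm 2 :=
  fun ed =>
    if ∃ i : ZMod S.n, Odd i.val ∧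
        (ed = S.f i ∨ ed = S.h i ∨ ed = S.G.rev (S.f i) ∨ ed = S.G.rev (S.h i))
    then - S.aG ed else S.aG ed



/-! ### Auxiliary material for Statement 9 -/

section Statement9Aux

lemma OrGraph.dst_rev' (G : OrGraph) (e : G.E) : G.dst (G.rev e) = G.src e := by
  have h := G.src_rev (G.rev e)
  rw [G.rev_rev] at h
  exact h.symm

lemma three_cases {α : Type} [Fintype α] [DecidableEq α] (h3 : Fintype.card α = 3)
    (a b c x : α) (hab : a ≠ b) (hac : a ≠ c) (hbc : b ≠ c) : x = a ∨ x = b ∨ x = c := by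
  by_contra hx
  push_neg at hx
  have h4 : ({x, a, b, c} : Finset α).card = 4 := by
    rw [Finset.card_insert_of_notMem (by simp [hx.1, hx.2.1, hx.2.2]),
      Finset.card_insert_of_notMem (by simp [hab, hac]),
      Finset.card_insert_of_notMem (by simp [hbc]), Finset.card_singleton]
  have hle := Finset.card_le_univ ({x, a, b, c} : Finset α)
  rw [h4, h3] at hle
  omega

lemma pm_cases {a b : Zm 2} (h : pm a = pm b) : a = b ∨ a = -b := Quotient.exact h

/-- The determinant of two vectors in `ℤ²`. -/
def det2 (a b : Zm 2) : ℤ := a 0 * b 1 - a 1 * b 0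

lemma det2_self (a : Zm 2) : det2 a a = 0 := by simp [det2]; ring

lemma det2_neg_left (a b : Zm 2) : det2 (-a) b = -det2 a b := by
  simp [det2, Pi.neg_apply]; ring

lemma det2_skew (a b : Zm 2) : det2 a b = -det2 b a := by simp [det2]; ring

lemma det2_smul_left (c : ℤ) (a b : Zm 2) : det2 (c • a) b = c * det2 a b := by
  simp [det2, Pi.smul_apply, smul_eq_mul]; ring

lemma det2_add_smul (x z w : Zm 2) (c : ℤ) :
    det2 (x + c • z) w = det2 x w + c * det2 z w := by
  simp [det2, Pi.add_apply, Pi.smul_apply, smul_eq_mul]; ring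

lemma det2_comb (kk cc : ℤ) (x y w : Zm 2) :
    det2 (kk • x - cc • y) w = kk * det2 x w - cc * det2 y w := by
  simp [det2, Pi.sub_apply, Pi.smul_apply, smul_eq_mul]; ring

lemma toC_re (a : Zm 2) : (toC a).re = (a 0 : ℝ) := by simp [toC]

lemma toC_im (a : Zm 2) : (toC a).im = (a 1 : ℝ) := by simp [toC]

lemma cross_toC (a b : Zm 2) : cross (toC a) (toC b) = ((det2 a b : ℤ) : ℝ) := by
  simp only [cross, toC_re, toC_im, det2]
  push_cast
  ring

/-- The successive determinants of the base labels. -/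
def DD (S : Section7) (i : ZMod S.n) : ℤ := det2 (S.aB (S.e i)) (S.aB (S.e (i + 1)))

lemma DD_pm (S : Section7) (i : ZMod S.n) : DD S i = 1 ∨ DD S i = -1 := by
  have h := S.delzant (i + 1)
  have hidx : i + 1 - 1 = i := by ring
  rw [hidx] at h
  exact h

lemma DD_ne (S : Section7) (i : ZMod S.n) : DD S i ≠ 0 := by
  rcases DD_pm S i with h | h <;> rw [h] <;> norm_num

lemma two_ne (S : Section7) : (2 : ZMod S.n) ≠ 0 := by
  haveI : NeZero S.n := ⟨by have := S.hn; omega⟩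
  intro h
  have h2 : ((2 : ℕ) : ZMod S.n) = 0 := by exact_mod_cast h
  rw [ZMod.natCast_eq_zero_iff] at h2
  have := Nat.le_of_dvd (by norm_num) h2
  have := S.hn
  omega

lemma one_ne (S : Section7) : (1 : ZMod S.n) ≠ 0 := by
  intro h
  apply two_ne S
  linear_combination (2 : ZMod S.n) * h

lemma add_two_ne (S : Section7) (i : ZMod S.n) : i + 2 ≠ i := by
  intro h
  apply two_ne S
  linear_combination h

lemma add_two_ne' (S : Section7) (i : ZMod S.n) : i + 2 ≠ i + 1 := by
  intro h
  apply one_ne S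
  linear_combination h

lemma cross_step (S : Section7) (i : ZMod S.n) :
    cross (S.P (i + 1) - S.P i) (S.P (i + 2) - S.P i)
      = S.tl i * S.tl (i + 1) * ((DD S i : ℤ) : ℝ) := by
  have h1 := S.slope i
  have h2 := S.slope (i + 1)
  have hidx : i + 1 + 1 = i + 2 := by ring
  rw [hidx] at h2
  have e2 : S.P (i + 2) - S.P i
      = (S.tl i • toC (S.aB (S.e i))) + (S.tl (i + 1) • toC (S.aB (S.e (i + 1)))) := by
    rw [← h1, ← h2]; ring
  rw [h1, e2]
  have hc : ∀ (s t : ℝ) (x y : ℂ), cross (s • x) (s • x + t • y) = s * t * cross x y := by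
    intro s t x y
    simp only [cross, Complex.real_smul, Complex.add_re, Complex.add_im, Complex.mul_re,
      Complex.mul_im, Complex.ofReal_re, Complex.ofReal_im]
    ring
  rw [hc, cross_toC]
  simp [DD]

lemma DD_const (S : Section7) (i j : ZMod S.n) : DD S i = DD S j := by
  suffices h : (∀ i, DD S i = 1) ∨ (∀ i, DD S i = -1) by
    rcases h with h | h <;> rw [h i, h j]
  rcases S.polygon with h | h
  · left
    intro i
    have hc := h i (i + 2) (add_two_ne S i) (add_two_ne' S i)
    rw [cross_step] at hc
    have t1 := S.tl_pos i
    have t2 := S.tl_pos (i + 1)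
    rcases DD_pm S i with h' | h'
    · exact h'
    · exfalso; rw [h'] at hc; push_cast at hc; nlinarith
  · right
    intro i
    have hc := h i (i + 2) (add_two_ne S i) (add_two_ne' S i)
    rw [cross_step] at hc
    have t1 := S.tl_pos i
    have t2 := S.tl_pos (i + 1)
    rcases DD_pm S i with h' | h'
    · exfalso; rw [h'] at hc; push_cast at hc; nlinarith
    · exact h'

/-- The sign of the fiber weight of `α'` relative to that of `Γ`. -/
noncomputable def eps (S : Section7) (α' : S.G.E → Zm 2) (i : ZMod S.n) : ℤ :=
  if α' (S.g i) = S.aG (S.g i) then 1 else -1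

lemma eps_pm (S : Section7) (α' : S.G.E → Zm 2) (i : ZMod S.n) :
    eps S α' i = 1 ∨ eps S α' i = -1 := by
  unfold eps; split <;> simp

lemma eps_spec (S : Section7) (α' : S.G.E → Zm 2)
    (hsame : ∀ ed, pm (α' ed) = pm (S.aG ed)) (j : ZMod S.n) :
    α' (S.g j) = eps S α' j • S.aG (S.g j) := by
  unfold eps
  split
  · rw [one_smul]; assumption
  · rcases pm_cases (hsame (S.g j)) with h | h
    · exact absurd h (by assumption)
    · rw [neg_one_smul]; exact h

lemma detW (S : Section7) (j : ZMod S.n) :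
    det2 (S.aG (S.g j)) (S.aB (S.e j)) = S.k j * DD S (j - 1) := by
  rw [S.fiberweight j, det2_comb, det2_self, mul_zero, sub_zero]
  unfold DD
  rw [show j - 1 + 1 = j by ring]

lemma detW1 (S : Section7) (j : ZMod S.n) :
    det2 (S.aG (S.g (j + 1))) (S.aB (S.e j))
      = (if j + 1 = 0 then -(S.k j) else S.k j) * DD S j := by
  rw [S.fiberweight (j + 1), show j + 1 - 1 = j by ring, det2_comb, det2_self, mul_zero,
    det2_skew (S.aB (S.e (j + 1))) (S.aB (S.e j))]
  unfold DD
  split <;> ring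

end Statement9Aux

lemma step_lemma (S : Section7) (α' : S.G.E → Zm 2) (C : Connection S.G)
    (hC : SignedCompat S.G α' C)
    (hsame : ∀ ed, pm (α' ed) = pm (S.aG ed))
    (hfh : ∀ i, α' (S.f i) = α' (S.h i)) (i : ZMod S.n) :
    eps S α' (i + 1) = eps S α' i := by
  -- facts from the signed fibration structure of Γ
  obtain ⟨_, C0, CB0, hsc0, hscB, hfc⟩ := S.hfib
  have haGf : ∀ j, S.aG (S.f j) = S.aB (S.e j) := by
    intro j; rw [hfc.1 (S.f j) (S.f_horiz j), S.f_over j]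
  have Lf0 : ∀ j, det2 (α' (S.f j)) (S.aB (S.e j)) = 0 := by
    intro j
    rcases pm_cases (show pm (α' (S.f j)) = pm (S.aB (S.e j)) by
      rw [hsame (S.f j), haGf j]) with h | h
    · rw [h, det2_self]
    · rw [h, det2_neg_left, det2_self, neg_zero]
  have Lh0 : ∀ j, det2 (α' (S.h j)) (S.aB (S.e j)) = 0 := by
    intro j; rw [← hfh j]; exact Lf0 j
  -- vertical/horizontal bookkeeping
  have hVrev : ∀ e, S.π.Vertical (S.G.rev e) ↔ S.π.Vertical e := by
    intro e
    unfold GraphFib.Vertical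
    rw [S.G.src_rev, OrGraph.dst_rev']
    exact eq_comm
  have ne_vh : ∀ x y : S.G.E, S.π.Vertical x → ¬ S.π.Vertical y → x ≠ y := by
    intro x y hx hy hh; exact hy (hh ▸ hx)
  have hornne : ∀ x y : S.G.E, ¬ S.π.Vertical y →
      S.π.onE x ≠ S.B.rev (S.π.onE y) → x ≠ S.G.rev y := by
    intro x y hy hne hh
    exact hne (by rw [hh, S.π.rev_onE y hy])
  have hbne : ∀ a b : ZMod S.n, S.v (a + 1) ≠ S.v b → S.e a ≠ S.B.rev (S.e b) := by
    intro a b hv he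
    apply hv
    rw [← S.dst_e a, he, OrGraph.dst_rev', S.src_e b]
  have vinj := S.v_bij.1
  have base1 : ∀ a : ZMod S.n, S.e (a + 1) ≠ S.B.rev (S.e a) := by
    intro a
    apply hbne
    intro hv
    apply add_two_ne S a
    have h2 := vinj hv
    linear_combination h2
  -- three edges at a vertex
  have mem3 : ∀ (w : S.G.V) (a b c x : S.G.E), S.G.src a = w → S.G.src b = w →
      S.G.src c = w → S.G.src x = w → a ≠ b → a ≠ c → b ≠ c →
      x = a ∨ x = b ∨ x = c := by
    intro w a b c x ha hb hc hx hab hac hbc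
    have hcard := S.hG.1 w
    have h := three_cases hcard ⟨a, ha⟩ ⟨b, hb⟩ ⟨c, hc⟩ ⟨x, hx⟩
      (fun hh => hab (congrArg Subtype.val hh))
      (fun hh => hac (congrArg Subtype.val hh))
      (fun hh => hbc (congrArg Subtype.val hh))
    rcases h with h | h | h
    exacts [Or.inl (congrArg Subtype.val h), Or.inr (Or.inl (congrArg Subtype.val h)),
      Or.inr (Or.inr (congrArg Subtype.val h))]
  -- transport of the fiber edge along f i
  have hsg : S.G.src (S.g i) = S.G.src (S.f i) := S.g_src i
  obtain ⟨c1, hc1⟩ := hC.2.1 (S.f i) (S.g i) hsg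
  have hXsrc : S.G.src (C.t (S.f i) (S.g i)) = S.G.dst (S.f i) := C.src_t _ _ hsg
  have hXne : C.t (S.f i) (S.g i) ≠ S.G.rev (S.f i) := by
    intro hh
    have h1 : C.t (S.f i) (S.g i) = C.t (S.f i) (S.f i) := by rw [C.t_self]; exact hh
    have h2 := congrArg (C.t (S.G.rev (S.f i))) h1
    rw [C.t_inv _ _ hsg, C.t_inv _ _ rfl] at h2
    exact ne_vh _ _ (S.g_vert i) (S.f_horiz i) h2
  have hLX : det2 (α' (C.t (S.f i) (S.g i))) (S.aB (S.e i))
      = eps S α' i * (S.k i * DD S (i - 1)) := by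
    rw [hc1, det2_add_smul, Lf0 i, mul_zero, add_zero, eps_spec S α' hsame i,
      det2_smul_left, detW S i]
  -- transport of the reversed fiber edge along h i
  have hsrg : S.G.src (S.G.rev (S.g i)) = S.G.src (S.h i) := by
    rw [S.G.src_rev]; exact S.g_dst i
  obtain ⟨c2, hc2⟩ := hC.2.1 (S.h i) (S.G.rev (S.g i)) hsrg
  have hYsrc : S.G.src (C.t (S.h i) (S.G.rev (S.g i))) = S.G.dst (S.h i) :=
    C.src_t _ _ hsrg
  have hYne : C.t (S.h i) (S.G.rev (S.g i)) ≠ S.G.rev (S.h i) := by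
    intro hh
    have h1 : C.t (S.h i) (S.G.rev (S.g i)) = C.t (S.h i) (S.h i) := by
      rw [C.t_self]; exact hh
    have h2 := congrArg (C.t (S.G.rev (S.h i))) h1
    rw [C.t_inv _ _ hsrg, C.t_inv _ _ rfl] at h2
    exact ne_vh _ _ ((hVrev (S.g i)).mpr (S.g_vert i)) (S.h_horiz i) h2
  have hLY : det2 (α' (C.t (S.h i) (S.G.rev (S.g i)))) (S.aB (S.e i))
      = -(eps S α' i * (S.k i * DD S (i - 1))) := by
    rw [hc2, det2_add_smul, Lh0 i, mul_zero, add_zero, hC.2.2 (S.g i), det2_neg_left,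
      eps_spec S α' hsame i, det2_smul_left, detW S i]
  -- how to conclude and the nonvanishing of the pivot quantity
  have conclude : eps S α' (i + 1) * (S.k i * DD S i)
      = eps S α' i * (S.k i * DD S (i - 1)) → eps S α' (i + 1) = eps S α' i := by
    intro hkey
    rw [DD_const S (i - 1) i] at hkey
    exact mul_right_cancel₀ (mul_ne_zero (S.k_ne i) (DD_ne S i)) hkey
  have hAne : eps S α' i * (S.k i * DD S (i - 1)) ≠ 0 := by
    apply mul_ne_zero _ (mul_ne_zero (S.k_ne i) (DD_ne S (i - 1)))
    rcases eps_pm S α' i with h | h <;> rw [h] <;> norm_num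
  by_cases h0 : i + 1 = 0
  · -- the twisted step
    have ieq : i = -1 := by linear_combination h0
    have hdf : S.G.dst (S.f i) = S.G.src (S.h 0) := by rw [ieq]; exact S.twist_f
    have hdh : S.G.dst (S.h i) = S.G.src (S.f 0) := by rw [ieq]; exact S.twist_h
    have base0 : S.e 0 ≠ S.B.rev (S.e i) := by
      rw [ieq]
      apply hbne
      intro hv
      apply two_ne S
      have h2 := vinj hv
      linear_combination h2
    have hg0 : det2 (α' (S.g 0)) (S.aB (S.e i))
        = eps S α' 0 * (-(S.k i) * DD S i) := by
      have hD := detW1 S i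
      rw [if_pos h0, h0] at hD
      rw [eps_spec S α' hsame 0, det2_smul_left, hD]
    rcases mem3 (S.G.dst (S.f i)) (S.h 0) (S.G.rev (S.g 0)) (S.G.rev (S.f i))
        (C.t (S.f i) (S.g i)) hdf.symm
        (by rw [S.G.src_rev, S.g_dst 0]; exact hdf.symm)
        (S.G.src_rev _) hXsrc
        (Ne.symm (ne_vh _ _ ((hVrev (S.g 0)).mpr (S.g_vert 0)) (S.h_horiz 0)))
        (hornne _ _ (S.f_horiz i) (by rw [S.h_over 0, S.f_over i]; exact base0))
        (ne_vh _ _ ((hVrev (S.g 0)).mpr (S.g_vert 0))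
          (fun hv => S.f_horiz i ((hVrev (S.f i)).mp hv)))
        with hXa | hXb | hXc
    · -- the transport of g i along f i is h 0 : look at the transport along h i
      have hXval : det2 (α' (S.h 0)) (S.aB (S.e i))
          = eps S α' i * (S.k i * DD S (i - 1)) := by rw [← hXa]; exact hLX
      rcases mem3 (S.G.dst (S.h i)) (S.f 0) (S.g 0) (S.G.rev (S.h i))
          (C.t (S.h i) (S.G.rev (S.g i))) hdh.symm
          (by rw [S.g_src 0]; exact hdh.symm)
          (S.G.src_rev _) hYsrc
          (Ne.symm (ne_vh _ _ (S.g_vert 0) (S.f_horiz 0)))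
          (hornne _ _ (S.h_horiz i) (by rw [S.f_over 0, S.h_over i]; exact base0))
          (ne_vh _ _ (S.g_vert 0) (fun hv => S.h_horiz i ((hVrev (S.h i)).mp hv)))
          with hYa | hYb | hYc
      · exfalso
        have hYval : det2 (α' (S.f 0)) (S.aB (S.e i))
            = -(eps S α' i * (S.k i * DD S (i - 1))) := by rw [← hYa]; exact hLY
        rw [hfh 0, hXval] at hYval
        exact hAne (by linarith)
      · apply conclude
        have hYval : det2 (α' (S.g 0)) (S.aB (S.e i))
            = -(eps S α' i * (S.k i * DD S (i - 1))) := by rw [← hYb]; exact hLY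
        rw [hg0] at hYval
        rw [h0]
        linear_combination -hYval
      · exact absurd hYc hYne
    · -- the transport of g i along f i is rev (g 0)
      apply conclude
      have hXval : det2 (α' (S.G.rev (S.g 0))) (S.aB (S.e i))
          = eps S α' i * (S.k i * DD S (i - 1)) := by rw [← hXb]; exact hLX
      rw [hC.2.2 (S.g 0), det2_neg_left, hg0] at hXval
      rw [h0]
      linear_combination hXval
    · exact absurd hXc hXne
  · -- the generic step
    have hdf : S.G.dst (S.f i) = S.G.src (S.f (i + 1)) := S.chain_f i h0
    have hdh : S.G.dst (S.h i) = S.G.src (S.h (i + 1)) := S.chain_h i h0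
    have hg1 : det2 (α' (S.g (i + 1))) (S.aB (S.e i))
        = eps S α' (i + 1) * (S.k i * DD S i) := by
      have hD := detW1 S i
      rw [if_neg h0] at hD
      rw [eps_spec S α' hsame (i + 1), det2_smul_left, hD]
    rcases mem3 (S.G.dst (S.f i)) (S.f (i + 1)) (S.g (i + 1)) (S.G.rev (S.f i))
        (C.t (S.f i) (S.g i)) hdf.symm
        (by rw [S.g_src (i + 1)]; exact hdf.symm)
        (S.G.src_rev _) hXsrc
        (Ne.symm (ne_vh _ _ (S.g_vert (i + 1)) (S.f_horiz (i + 1))))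
        (hornne _ _ (S.f_horiz i) (by rw [S.f_over (i + 1), S.f_over i]; exact base1 i))
        (ne_vh _ _ (S.g_vert (i + 1)) (fun hv => S.f_horiz i ((hVrev (S.f i)).mp hv)))
        with hXa | hXb | hXc
    · -- the transport of g i along f i is f (i+1) : look at the transport along h i
      have hXval : det2 (α' (S.f (i + 1))) (S.aB (S.e i))
          = eps S α' i * (S.k i * DD S (i - 1)) := by rw [← hXa]; exact hLX
      rcases mem3 (S.G.dst (S.h i)) (S.h (i + 1)) (S.G.rev (S.g (i + 1))) (S.G.rev (S.h i))
          (C.t (S.h i) (S.G.rev (S.g i))) hdh.symm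
          (by rw [S.G.src_rev, S.g_dst (i + 1)]; exact hdh.symm)
          (S.G.src_rev _) hYsrc
          (Ne.symm (ne_vh _ _ ((hVrev (S.g (i + 1))).mpr (S.g_vert (i + 1)))
            (S.h_horiz (i + 1))))
          (hornne _ _ (S.h_horiz i) (by rw [S.h_over (i + 1), S.h_over i]; exact base1 i))
          (ne_vh _ _ ((hVrev (S.g (i + 1))).mpr (S.g_vert (i + 1)))
            (fun hv => S.h_horiz i ((hVrev (S.h i)).mp hv)))
          with hYa | hYb | hYc
      · exfalso
        have hYval : det2 (α' (S.h (i + 1))) (S.aB (S.e i))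
            = -(eps S α' i * (S.k i * DD S (i - 1))) := by rw [← hYa]; exact hLY
        rw [← hfh (i + 1), hXval] at hYval
        exact hAne (by linarith)
      · apply conclude
        have hYval : det2 (α' (S.G.rev (S.g (i + 1)))) (S.aB (S.e i))
            = -(eps S α' i * (S.k i * DD S (i - 1))) := by rw [← hYb]; exact hLY
        rw [hC.2.2 (S.g (i + 1)), det2_neg_left, hg1] at hYval
        linear_combination -hYval
      · exact absurd hYc hYne
    · apply conclude
      have hXval : det2 (α' (S.g (i + 1))) (S.aB (S.e i))
          = eps S α' i * (S.k i * DD S (i - 1)) := by rw [← hXb]; exact hLX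
      rw [hg1] at hXval
      exact hXval
    · exact absurd hXc hXne


/-- in the Section 7 setting, if a signed GKM structure `α'` on the
underlying graph of `Γ` induces the same unsigned GKM graph and the labels of
`f i` and `h i` agree for all `i`, then the fiber weights of `α'` agree with those
of `Γ` up to a global sign. -/
theorem statement9 (S : Section7) (α' : S.G.E → Zm 2)
    (hcompat : ∃ C : Connection S.G, SignedCompat S.G α' C)
    (hsame : ∀ ed, pm (α' ed) = pm (S.aG ed))
    (hfh : ∀ i, α' (S.f i) = α' (S.h i)) :
    (∀ i, α' (S.g i) = S.aG (S.g i)) ∨ (∀ i, α' (S.g i) = - S.aG (S.g i)) := by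
  obtain ⟨C, hC⟩ := hcompat
  haveI : NeZero S.n := ⟨by have := S.hn; omega⟩
  have hstep : ∀ i, eps S α' (i + 1) = eps S α' i := step_lemma S α' C hC hsame hfh
  have hconst : ∀ i, eps S α' i = eps S α' 0 := by
    have key : ∀ m : ℕ, eps S α' (m : ZMod S.n) = eps S α' 0 := by
      intro m
      induction m with
      | zero => norm_num
      | succ m ih =>
        rw [show ((m + 1 : ℕ) : ZMod S.n) = ((m : ℕ) : ZMod S.n) + 1 by push_cast; ring,
          hstep]
        exact ih
    intro i
    have hi : ((i.val : ℕ) : ZMod S.n) = i := ZMod.natCast_rightInverse i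
    rw [← hi]
    exact key i.val
  rcases eps_pm S α' 0 with h | h
  · left
    intro i
    rw [eps_spec S α' hsame i, hconst i, h, one_smul]
  · right
    intro i
    rw [eps_spec S α' hsame i, hconst i, h, neg_one_smul]


end GKMPaper
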